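/- arXiv:1907.09415 — 4 statements merged into one kernel-verified Lean document; each statement's English description precedes it below -/
import Mathlib

section
/- There is no 2-qubit unitary U such that U(|φ⟩⊗|0⟩) = |φ⟩⊗|φ⟩ for every single-qubit state |φ⟩ (the quantum no-cloning theorem). -/
/-- The quantum no-cloning theorem: there is no 2-qubit unitary `U` mapping
`|φ⟩⊗|0⟩` to `|φ⟩⊗|φ⟩` for every single-qubit state `|φ⟩`. -/
theorem no_cloning :
    ¬ ∃ U ∈ Matrix.unitaryGroup (Fin 2 × Fin 2) ℂ,
      ∀ φ : EuclideanSpace ℂ (Fin 2), ‖φ‖ = 1 →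
        U.mulVec (fun p => φ p.1 * (if p.2 = 0 then 1 else 0)) =
          (fun p => φ p.1 * φ p.2) := by
  rintro ⟨U, -, h⟩
  set c : ℂ := ((Real.sqrt 2 : ℝ) : ℂ)⁻¹ with hc
  have hs2 : Real.sqrt 2 ≠ 0 := by positivity
  have hcne : c ≠ 0 := by
    simp [hc, hs2]
  -- the three states
  set φ0 : EuclideanSpace ℂ (Fin 2) := WithLp.toLp 2 (fun i : Fin 2 => (if i = 0 then 1 else 0 : ℂ)) with hφ0
  set φ1 : EuclideanSpace ℂ (Fin 2) := WithLp.toLp 2 (fun i : Fin 2 => (if i = 1 then 1 else 0 : ℂ)) with hφ1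
  set φp : EuclideanSpace ℂ (Fin 2) := WithLp.toLp 2 (fun _ : Fin 2 => c) with hφp
  have n0 : ‖φ0‖ = 1 := by
    simp [hφ0, EuclideanSpace.norm_eq, Fin.sum_univ_two]
  have n1 : ‖φ1‖ = 1 := by
    simp [hφ1, EuclideanSpace.norm_eq, Fin.sum_univ_two]
  have ncv : ‖c‖ = (Real.sqrt 2)⁻¹ := by
    simp [hc, Real.sqrt_nonneg, abs_of_nonneg]
  have np : ‖φp‖ = 1 := by
    simp only [hφp, EuclideanSpace.norm_eq, Fin.sum_univ_two, ncv]
    rw [show ((Real.sqrt 2)⁻¹)^2 + ((Real.sqrt 2)⁻¹)^2 = 1 by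
      rw [← two_mul, inv_pow, sq, Real.mul_self_sqrt (by norm_num)]; norm_num]
    exact Real.sqrt_one
  have h0 := h φ0 n0
  have h1 := h φ1 n1
  have hp := h φp np
  -- linearity: input vector of φp equals c • (input of φ0 + input of φ1)
  have hvec : (fun p : Fin 2 × Fin 2 => φp p.1 * (if p.2 = 0 then 1 else 0)) =
      c • ((fun p : Fin 2 × Fin 2 => φ0 p.1 * (if p.2 = 0 then 1 else 0)) +
           (fun p : Fin 2 × Fin 2 => φ1 p.1 * (if p.2 = 0 then 1 else 0))) := by
    funext p
    obtain ⟨i, j⟩ := p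
    fin_cases i <;> simp [hφ0, hφ1, hφp, mul_comm]
  have key : U.mulVec (fun p : Fin 2 × Fin 2 => φp p.1 * (if p.2 = 0 then 1 else 0)) =
      c • (U.mulVec (fun p : Fin 2 × Fin 2 => φ0 p.1 * (if p.2 = 0 then 1 else 0)) +
           U.mulVec (fun p : Fin 2 × Fin 2 => φ1 p.1 * (if p.2 = 0 then 1 else 0))) := by
    rw [hvec, Matrix.mulVec_smul, Matrix.mulVec_add]
  rw [hp, h0, h1] at key
  have := congrFun key ((0 : Fin 2), (1 : Fin 2))
  simp [hφ0, hφ1, hφp] at this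
  exact hcne this
end

section
/- In Grover's algorithm, the recursion a_{k+1} = ((N−2t)/N)·a_k + (2(N−t)/N)·b_k, b_{k+1} = (−2t/N)·a_k + ((N−2t)/N)·b_k with initial values a_0 = b_0 = 1/√N has the closed-form solution a_k = (1/√t)·sin((2k+1)θ) and b_k = (1/√(N−t))·cos((2k+1)θ), where θ = arcsin(√(t/N)). -/
/-- Closed form for the amplitudes in Grover's algorithm: the recursion
`a_{k+1} = ((N−2t)/N)a_k + (2(N−t)/N)b_k`, `b_{k+1} = (−2t/N)a_k + ((N−2t)/N)b_k`
with `a_0 = b_0 = 1/√N` is solved by `a_k = sin((2k+1)θ)/√t` and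
`b_k = cos((2k+1)θ)/√(N−t)`, where `θ = arcsin(√(t/N))`. -/
theorem grover_closed_form (N t : ℕ) (ht1 : 1 ≤ t) (ht2 : t < N)
    (a b : ℕ → ℝ) (θ : ℝ) (hθ : θ = Real.arcsin (Real.sqrt ((t : ℝ) / N)))
    (ha0 : a 0 = 1 / Real.sqrt N) (hb0 : b 0 = 1 / Real.sqrt N)
    (hrec : ∀ k, a (k + 1) = ((N : ℝ) - 2 * t) / N * a k + 2 * ((N : ℝ) - t) / N * b k ∧
                 b (k + 1) = -(2 * t) / N * a k + ((N : ℝ) - 2 * t) / N * b k) :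
    ∀ k : ℕ, a k = (1 / Real.sqrt t) * Real.sin ((2 * k + 1) * θ) ∧
             b k = (1 / Real.sqrt ((N : ℝ) - t)) * Real.cos ((2 * k + 1) * θ) := by
  have htpos : (0:ℝ) < t := by exact_mod_cast ht1
  have hNpos : (0:ℝ) < N := by exact_mod_cast (lt_of_le_of_lt (Nat.zero_le t) ht2)
  have hNt : (0:ℝ) < (N:ℝ) - t := by
    have : (t:ℝ) < N := by exact_mod_cast ht2
    linarith
  set S := Real.sqrt t with hSdef
  set U := Real.sqrt ((N:ℝ) - t) with hUdef
  set n := Real.sqrt N with hndef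
  have hS : 0 < S := Real.sqrt_pos.mpr htpos
  have hU : 0 < U := Real.sqrt_pos.mpr hNt
  have hn : 0 < n := Real.sqrt_pos.mpr hNpos
  have hS2 : S * S = t := Real.mul_self_sqrt htpos.le
  have hU2 : U * U = (N:ℝ) - t := Real.mul_self_sqrt hNt.le
  have hn2 : n * n = N := Real.mul_self_sqrt hNpos.le
  have hratio : (0:ℝ) ≤ (t:ℝ)/N := by positivity
  have hratio1 : (t:ℝ)/N ≤ 1 := by
    rw [div_le_one hNpos]; exact_mod_cast ht2.le
  have hsin : Real.sin θ = S / n := by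
    rw [hθ, Real.sin_arcsin (le_trans (by norm_num) (Real.sqrt_nonneg _)) (Real.sqrt_le_one.mpr hratio1)]
    exact Real.sqrt_div (Nat.cast_nonneg t) _
  have hcos : Real.cos θ = U / n := by
    rw [hθ, Real.cos_arcsin]
    rw [Real.sq_sqrt hratio]
    have : 1 - (t:ℝ)/N = ((N:ℝ) - t)/N := by field_simp
    rw [this, Real.sqrt_div hNt.le]
  have hcos2 : Real.cos (2*θ) = ((N:ℝ) - 2*t)/N := by
    have h : (U/n)^2 = ((N:ℝ)-t)/N := by rw [div_pow, sq, sq, hU2, hn2]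
    rw [Real.cos_two_mul, hcos, h]
    field_simp
    ring
  have hsin2 : Real.sin (2*θ) = 2*S*U/N := by
    have h : S/n*(U/n) = S*U/N := by rw [div_mul_div_comm, hn2]
    rw [Real.sin_two_mul, hsin, hcos, mul_assoc, h]
    ring
  intro k
  induction k with
  | zero =>
    constructor
    · rw [ha0]
      norm_num
      rw [hsin]
      field_simp
    · rw [hb0]
      norm_num
      rw [hcos]
      field_simp
  | succ k ih =>
    obtain ⟨iha, ihb⟩ := ih
    obtain ⟨h1, h2⟩ := hrec k
    have hx : (2*((k:ℝ)+1)+1)*θ = (2*k+1)*θ + 2*θ := by ring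
    constructor
    · rw [h1, iha, ihb]
      push_cast
      rw [hx, Real.sin_add, hcos2, hsin2]
      field_simp
      linear_combination (-2 * S * Real.cos ((2*(k:ℝ)+1)*θ)) * hU2
    · rw [h2, iha, ihb]
      push_cast
      rw [hx, Real.cos_add, hcos2, hsin2]
      field_simp
      linear_combination (2 * U * Real.sin ((2*(k:ℝ)+1)*θ)) * hS2
end

section
/- Let θ = arcsin(√(t/N)) with 1 ≤ t ≤ N, and let k be the integer closest to π/(4θ) − 1/2. Then the failure probability of Grover's algorithm after k iterations satisfies cos²((2k+1)θ) ≤ sin²(θ) = t/N. -/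
/-- If `θ = arcsin(√(t/N))` and `k` is the integer closest to `π/(4θ) − 1/2`,
then the failure probability of Grover's algorithm after `k` iterations
satisfies `cos²((2k+1)θ) ≤ sin²θ = t/N`. -/
theorem grover_failure_bound (N t : ℕ) (ht1 : 1 ≤ t) (ht2 : t ≤ N)
    (θ : ℝ) (hθ : θ = Real.arcsin (Real.sqrt ((t : ℝ) / N)))
    (k : ℕ) (hk : |(k : ℝ) - (Real.pi / (4 * θ) - 1 / 2)| ≤ 1 / 2) :
    Real.cos ((2 * k + 1) * θ) ^ 2 ≤ Real.sin θ ^ 2 ∧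
    Real.sin θ ^ 2 = (t : ℝ) / N := by
  have hN : (0 : ℝ) < N := by
    have : 1 ≤ N := le_trans ht1 ht2
    exact_mod_cast Nat.lt_of_lt_of_le Nat.zero_lt_one this
  have htN0 : (0 : ℝ) < (t : ℝ) / N := by
    apply div_pos _ hN
    exact_mod_cast ht1
  have htN1 : (t : ℝ) / N ≤ 1 := by
    rw [div_le_one hN]; exact_mod_cast ht2
  have hs01 : Real.sqrt ((t : ℝ) / N) ≤ 1 := by
    rw [show (1:ℝ) = Real.sqrt 1 by simp]
    exact Real.sqrt_le_sqrt htN1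
  have hsin : Real.sin θ = Real.sqrt ((t : ℝ) / N) := by
    rw [hθ, Real.sin_arcsin (le_trans (by norm_num) (Real.sqrt_nonneg _)) hs01]
  have hsin2 : Real.sin θ ^ 2 = (t : ℝ) / N := by
    rw [hsin, Real.sq_sqrt htN0.le]
  refine ⟨?_, hsin2⟩
  have hθpos : 0 < θ := by
    rw [hθ]; apply Real.arcsin_pos.2; positivity
  have hθle : θ ≤ Real.pi / 2 := by rw [hθ]; exact Real.arcsin_le_pi_div_two _
  set d : ℝ := (k : ℝ) - (Real.pi / (4 * θ) - 1 / 2) with hd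
  clear_value d
  have hkey : (2 * (k:ℝ) + 1) * θ = Real.pi / 2 + 2 * d * θ := by
    have : ((2:ℝ) * (Real.pi / (4 * θ) - 1/2) + 1) * θ = Real.pi / 2 := by
      field_simp; ring
    rw [hd]; nlinarith [this]
  have hcos : Real.cos ((2 * (k:ℝ) + 1) * θ) = - Real.sin (2 * d * θ) := by
    rw [hkey, Real.cos_add]; simp
  have habs : |2 * d * θ| ≤ θ := by
    rw [abs_mul, abs_mul, abs_of_pos hθpos]
    have : |(2:ℝ)| * |d| ≤ 1 := by
      rw [abs_of_pos (by norm_num : (0:ℝ) < 2)]; linarith [hk]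
    nlinarith [abs_nonneg d, hθpos]
  have hsinle : |Real.sin (2 * d * θ)| ≤ Real.sin θ := by
    obtain ⟨h3, h2⟩ := abs_le.1 habs
    have h1 : -(Real.pi/2) ≤ 2 * d * θ := by linarith
    have h4 : 2 * d * θ ≤ Real.pi / 2 := by linarith
    rw [abs_le]
    constructor
    · have := Real.sin_le_sin_of_le_of_le_pi_div_two (by linarith) h4 h3
      rw [Real.sin_neg] at this; linarith
    · exact Real.sin_le_sin_of_le_of_le_pi_div_two h1 hθle h2
  have : Real.cos ((2 * (k:ℝ) + 1) * θ) ^ 2 = Real.sin (2 * d * θ) ^ 2 := by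
    rw [hcos]; ring
  rw [this]
  calc Real.sin (2 * d * θ) ^ 2 = |Real.sin (2 * d * θ)| ^ 2 := (sq_abs _).symm
    _ ≤ Real.sin θ ^ 2 := by
        apply pow_le_pow_left₀ (abs_nonneg _) hsinle
end

section
/- Tsirelson-type operator identity: if A₀, A₁, B₀, B₁ are Hermitian operators with A_x² = I and B_y² = I, A's commuting with B's, and C = A₀B₀ + A₀B₁ + A₁B₀ − A₁B₁, then C² = 4I + (A₀A₁ − A₁A₀)(B₁B₀ − B₀B₁), and consequently ‖C‖ ≤ 2√2. -/
lemma prod_swap {R : Type*} [Ring R] (a b a' b' : R) (h : b * a' = a' * b) :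
    (a * b) * (a' * b') = (a * a') * (b * b') := by
  rw [mul_assoc, ← mul_assoc b, h, mul_assoc, ← mul_assoc]

lemma tsirelson_identity {R : Type*} [Ring R] (a0 a1 b0 b1 : R)
    (ha0 : a0 * a0 = 1) (ha1 : a1 * a1 = 1) (hb0 : b0 * b0 = 1) (hb1 : b1 * b1 = 1)
    (h00 : a0 * b0 = b0 * a0) (h01 : a0 * b1 = b1 * a0)
    (h10 : a1 * b0 = b0 * a1) (h11 : a1 * b1 = b1 * a1) :
    (a0*b0 + a0*b1 + a1*b0 - a1*b1) * (a0*b0 + a0*b1 + a1*b0 - a1*b1)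
      = 4 + (a0*a1 - a1*a0) * (b1*b0 - b0*b1) := by
  simp only [add_mul, mul_add, sub_mul, mul_sub,
    prod_swap a0 b0 a0 b0 h00.symm, prod_swap a0 b0 a0 b1 h00.symm,
    prod_swap a0 b0 a1 b0 h10.symm, prod_swap a0 b0 a1 b1 h10.symm,
    prod_swap a0 b1 a0 b0 h01.symm, prod_swap a0 b1 a0 b1 h01.symm,
    prod_swap a0 b1 a1 b0 h11.symm, prod_swap a0 b1 a1 b1 h11.symm,
    prod_swap a1 b0 a0 b0 h00.symm, prod_swap a1 b0 a0 b1 h00.symm,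
    prod_swap a1 b0 a1 b0 h10.symm, prod_swap a1 b0 a1 b1 h10.symm,
    prod_swap a1 b1 a0 b0 h01.symm, prod_swap a1 b1 a0 b1 h01.symm,
    prod_swap a1 b1 a1 b0 h11.symm, prod_swap a1 b1 a1 b1 h11.symm,
    ha0, ha1, hb0, hb1, one_mul, mul_one]
  have h4 : (4 : R) = 1 + 1 + 1 + 1 := by norm_num
  rw [h4]
  noncomm_ring

set_option maxHeartbeats 1000000 in
/-- Tsirelson-type operator identity: if `A₀,A₁,B₀,B₁` are self-adjoint with
square the identity, the `A`'s commuting with the `B`'s, and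
`C = A₀B₀ + A₀B₁ + A₁B₀ − A₁B₁`, then
`C² = 4·1 + (A₀A₁−A₁A₀)(B₁B₀−B₀B₁)`, and consequently `‖C‖ ≤ 2√2`. -/
theorem tsirelson_bound (d : ℕ)
    (A₀ A₁ B₀ B₁ : EuclideanSpace ℂ (Fin d) →L[ℂ] EuclideanSpace ℂ (Fin d))
    (hA₀ : IsSelfAdjoint A₀) (hA₁ : IsSelfAdjoint A₁)
    (hB₀ : IsSelfAdjoint B₀) (hB₁ : IsSelfAdjoint B₁)
    (hA₀sq : A₀ * A₀ = 1) (hA₁sq : A₁ * A₁ = 1)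
    (hB₀sq : B₀ * B₀ = 1) (hB₁sq : B₁ * B₁ = 1)
    (h00 : Commute A₀ B₀) (h01 : Commute A₀ B₁)
    (h10 : Commute A₁ B₀) (h11 : Commute A₁ B₁) :
    letI C := A₀ * B₀ + A₀ * B₁ + A₁ * B₀ - A₁ * B₁
    C * C = 4 + (A₀ * A₁ - A₁ * A₀) * (B₁ * B₀ - B₀ * B₁) ∧
    ‖C‖ ≤ 2 * Real.sqrt 2 := by
  set C := A₀ * B₀ + A₀ * B₁ + A₁ * B₀ - A₁ * B₁ with hCdef
  have hid := tsirelson_identity A₀ A₁ B₀ B₁ hA₀sq hA₁sq hB₀sq hB₁sq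
    h00.eq h01.eq h10.eq h11.eq
  refine ⟨hid, ?_⟩
  -- norm of 1 is ≤ 1 (equals 0 if d = 0)
  have hone : ‖(1 : EuclideanSpace ℂ (Fin d) →L[ℂ] EuclideanSpace ℂ (Fin d))‖ ≤ 1 := by
    rw [ContinuousLinearMap.one_def]
    exact ContinuousLinearMap.norm_id_le
  -- each operator has norm ≤ 1
  have hn : ∀ (T : EuclideanSpace ℂ (Fin d) →L[ℂ] EuclideanSpace ℂ (Fin d)),
      IsSelfAdjoint T → T * T = 1 → ‖T‖ ≤ 1 := by
    intro T hT hTsq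
    have h1 : ‖T‖ * ‖T‖ = ‖star T * T‖ := (CStarRing.norm_star_mul_self).symm
    rw [hT.star_eq, hTsq] at h1
    nlinarith [norm_nonneg T, hone, h1]
  have hnA₀ := hn A₀ hA₀ hA₀sq
  have hnA₁ := hn A₁ hA₁ hA₁sq
  have hnB₀ := hn B₀ hB₀ hB₀sq
  have hnB₁ := hn B₁ hB₁ hB₁sq
  -- C is self-adjoint
  have hstep : star C = star (A₀ * B₀ + A₀ * B₁ + A₁ * B₀) - star (A₁ * B₁) := by
    rw [hCdef]; exact star_sub (A₀ * B₀ + A₀ * B₁ + A₁ * B₀) (A₁ * B₁)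
  have hC : star C = C := by
    rw [hstep, (star_add (A₀ * B₀ + A₀ * B₁) (A₁ * B₀) :), (star_add (A₀ * B₀) (A₀ * B₁) :), star_mul, star_mul, star_mul, star_mul,
      hA₀.star_eq, hA₁.star_eq, hB₀.star_eq, hB₁.star_eq,
      ← h00.eq, ← h01.eq, ← h10.eq, ← h11.eq]
  -- ‖C‖² = ‖C*C‖
  have hCsq : ‖C‖ * ‖C‖ = ‖C * C‖ := by
    have : C * C = star C * C := by rw [hC]
    rw [this]
    exact (CStarRing.norm_star_mul_self).symm
  -- bound ‖C*C‖ ≤ 8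
  have h4 : ‖(4 : EuclideanSpace ℂ (Fin d) →L[ℂ] EuclideanSpace ℂ (Fin d))‖ ≤ 4 := by
    have : (4 : EuclideanSpace ℂ (Fin d) →L[ℂ] EuclideanSpace ℂ (Fin d)) = 1 + 1 + 1 + 1 := by
      norm_num
    rw [this]
    calc ‖(1:_) + 1 + 1 + (1 : EuclideanSpace ℂ (Fin d) →L[ℂ] EuclideanSpace ℂ (Fin d))‖
        ≤ ‖(1:_) + 1 + (1 : EuclideanSpace ℂ (Fin d) →L[ℂ] EuclideanSpace ℂ (Fin d))‖ + ‖(1 : EuclideanSpace ℂ (Fin d) →L[ℂ] EuclideanSpace ℂ (Fin d))‖ := norm_add_le _ _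
      _ ≤ (‖(1:_) + (1 : EuclideanSpace ℂ (Fin d) →L[ℂ] EuclideanSpace ℂ (Fin d))‖ + ‖(1 : EuclideanSpace ℂ (Fin d) →L[ℂ] EuclideanSpace ℂ (Fin d))‖) + 1 := by
          gcongr; exact norm_add_le _ _
      _ ≤ (‖(1 : EuclideanSpace ℂ (Fin d) →L[ℂ] EuclideanSpace ℂ (Fin d))‖ + ‖(1 : EuclideanSpace ℂ (Fin d) →L[ℂ] EuclideanSpace ℂ (Fin d))‖ + 1) + 1 := by
          gcongr; exact norm_add_le _ _
      _ ≤ 1 + 1 + 1 + 1 := by gcongr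
      _ = 4 := by norm_num
  have hXA : ‖A₀ * A₁ - A₁ * A₀‖ ≤ 2 := by
    calc ‖A₀ * A₁ - A₁ * A₀‖ ≤ ‖A₀ * A₁‖ + ‖A₁ * A₀‖ := norm_sub_le _ _
      _ ≤ ‖A₀‖ * ‖A₁‖ + ‖A₁‖ * ‖A₀‖ := by gcongr <;> exact norm_mul_le _ _
      _ ≤ 1 * 1 + 1 * 1 := by gcongr
      _ = 2 := by norm_num
  have hXB : ‖B₁ * B₀ - B₀ * B₁‖ ≤ 2 := by
    calc ‖B₁ * B₀ - B₀ * B₁‖ ≤ ‖B₁ * B₀‖ + ‖B₀ * B₁‖ := norm_sub_le _ _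
      _ ≤ ‖B₁‖ * ‖B₀‖ + ‖B₀‖ * ‖B₁‖ := by gcongr <;> exact norm_mul_le _ _
      _ ≤ 1 * 1 + 1 * 1 := by gcongr
      _ = 2 := by norm_num
  have h8 : ‖C * C‖ ≤ 8 := by
    rw [hid]
    calc ‖(4:_) + (A₀ * A₁ - A₁ * A₀) * (B₁ * B₀ - B₀ * B₁)‖
        ≤ ‖(4 : EuclideanSpace ℂ (Fin d) →L[ℂ] EuclideanSpace ℂ (Fin d))‖ + ‖(A₀ * A₁ - A₁ * A₀) * (B₁ * B₀ - B₀ * B₁)‖ := norm_add_le _ _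
      _ ≤ 4 + ‖A₀ * A₁ - A₁ * A₀‖ * ‖B₁ * B₀ - B₀ * B₁‖ := by
          gcongr; exact norm_mul_le _ _
      _ ≤ 4 + 2 * 2 := by
          have := mul_le_mul hXA hXB (norm_nonneg _) (by norm_num : (0:ℝ) ≤ 2)
          linarith
      _ = 8 := by norm_num
  have hsq : ‖C‖ * ‖C‖ ≤ 8 := hCsq ▸ h8
  have h2 : Real.sqrt 2 * Real.sqrt 2 = 2 := Real.mul_self_sqrt (by norm_num)
  nlinarith [norm_nonneg C, Real.sqrt_nonneg 2]
end
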